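/- Let p be a prime and k a commutative ring with p·1 = 0, and let W = W_d(k) be the d-th Weyl algebra over k (d ≥ 1). Let Z be the center of W, let A ⊆ W be the k-subalgebra generated by t_1, …, t_d, ∂_1^p, …, ∂_d^p (the centralizer of the t's), and let R' ⊆ Z be the k-subalgebra generated by t_1^p, …, t_d^p. Then the multiplication map Z ⊗_{R'} A_0 → A, where A_0 ⊆ A is the k-subalgebra generated by t_1, …, t_d, z ⊗ a ↦ z·a, is an isomorphism; equivalently, A ≅ Z ⊗_{R'} R where R is the polynomial algebra k[t_1,…,t_d] mapping to W by t_i ↦ t_i and R' maps to R by t_i^p ↦ t_i^p. -/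

import Mathlib

noncomputable section

/-- The defining relations of the `d`-th Weyl algebra: `t_i t_j = t_j t_i`,
`∂_i ∂_j = ∂_j ∂_i` and `∂_i t_j = t_j ∂_i + δ_{ij}`. -/
inductive WeylRel (k : Type*) [CommRing k] (d : ℕ) :
    FreeAlgebra k (Fin d ⊕ Fin d) → FreeAlgebra k (Fin d ⊕ Fin d) → Prop
  | tt (i j : Fin d) :
      WeylRel k d (FreeAlgebra.ι k (Sum.inl i) * FreeAlgebra.ι k (Sum.inl j))
        (FreeAlgebra.ι k (Sum.inl j) * FreeAlgebra.ι k (Sum.inl i))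
  | dd (i j : Fin d) :
      WeylRel k d (FreeAlgebra.ι k (Sum.inr i) * FreeAlgebra.ι k (Sum.inr j))
        (FreeAlgebra.ι k (Sum.inr j) * FreeAlgebra.ι k (Sum.inr i))
  | dt (i j : Fin d) :
      WeylRel k d (FreeAlgebra.ι k (Sum.inr i) * FreeAlgebra.ι k (Sum.inl j))
        (FreeAlgebra.ι k (Sum.inl j) * FreeAlgebra.ι k (Sum.inr i) + if i = j then 1 else 0)

/-- The `d`-th Weyl algebra over `k`: the free algebra on `t_1,…,t_d,∂_1,…,∂_d` modulo the
two-sided ideal generated by the Weyl relations. -/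
abbrev WeylAlgebra (k : Type*) [CommRing k] (d : ℕ) := RingQuot (WeylRel k d)

namespace WeylAlgebra

variable (k : Type*) [CommRing k] (d : ℕ)

/-- The generator `t_i` of the Weyl algebra. -/
def t (i : Fin d) : WeylAlgebra k d :=
  RingQuot.mkAlgHom k (WeylRel k d) (FreeAlgebra.ι k (Sum.inl i))

/-- The generator `∂_i` of the Weyl algebra. -/
def del (i : Fin d) : WeylAlgebra k d :=
  RingQuot.mkAlgHom k (WeylRel k d) (FreeAlgebra.ι k (Sum.inr i))

/-- The monomial `t^I = t_1^{i_1} ⋯ t_d^{i_d}` in the Weyl algebra. -/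
def monomialT (I : Fin d → ℕ) : WeylAlgebra k d :=
  ((List.finRange d).map fun i => t k d i ^ I i).prod

/-- The monomial `∂^J = ∂_1^{j_1} ⋯ ∂_d^{j_d}` in the Weyl algebra. -/
def monomialD (J : Fin d → ℕ) : WeylAlgebra k d :=
  ((List.finRange d).map fun i => del k d i ^ J i).prod

end WeylAlgebra

namespace WeylAux

open WeylAlgebra

variable {k : Type*} [CommRing k] {d : ℕ}

lemma t_t (i j : Fin d) : t k d i * t k d j = t k d j * t k d i := by
  simp only [t, ← map_mul]
  exact RingQuot.mkAlgHom_rel k (WeylRel.tt i j)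

lemma del_del (i j : Fin d) : del k d i * del k d j = del k d j * del k d i := by
  simp only [del, ← map_mul]
  exact RingQuot.mkAlgHom_rel k (WeylRel.dd i j)

lemma del_t (i j : Fin d) :
    del k d i * t k d j = t k d j * del k d i + if i = j then 1 else 0 := by
  simp only [t, del, ← map_mul]
  rw [RingQuot.mkAlgHom_rel k (WeylRel.dt i j)]
  simp [apply_ite (RingQuot.mkAlgHom k (WeylRel k d))]

lemma commute_t_t (i j : Fin d) : Commute (t k d i) (t k d j) := t_t i j

lemma commute_del_del (i j : Fin d) : Commute (del k d i) (del k d j) := del_del i j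

lemma del_t_ne {i j : Fin d} (h : i ≠ j) : Commute (del k d i) (t k d j) := by
  have := del_t (k := k) i j
  rw [if_neg h, add_zero] at this
  exact this

lemma del_t_self (i : Fin d) : del k d i * t k d i = t k d i * del k d i + 1 := by
  have := del_t (k := k) i i
  rwa [if_pos rfl] at this

lemma del_mul_t_pow (i : Fin d) (n : ℕ) :
    del k d i * t k d i ^ n = t k d i ^ n * del k d i + n • t k d i ^ (n - 1) := by
  induction n with
  | zero => simp
  | succ m ih =>
    rw [pow_succ, ← mul_assoc, ih, add_mul, mul_assoc, del_t_self, mul_add, mul_one,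
      ← mul_assoc, ← pow_succ]
    cases m with
    | zero => simp
    | succ l =>
      rw [Nat.succ_sub_one, smul_mul_assoc, ← pow_succ, Nat.succ_sub_one]
      rw [add_assoc]
      congr 1
      conv_rhs => rw [succ_nsmul']

lemma del_pow_mul_t (i : Fin d) (n : ℕ) :
    del k d i ^ n * t k d i = t k d i * del k d i ^ n + n • del k d i ^ (n - 1) := by
  induction n with
  | zero => simp
  | succ m ih =>
    rw [pow_succ', mul_assoc, ih, mul_add, ← mul_assoc, del_t_self, add_mul, one_mul,
      mul_assoc, ← pow_succ']
    cases m with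
    | zero => simp
    | succ l =>
      rw [Nat.succ_sub_one, mul_smul_comm, ← pow_succ', Nat.succ_sub_one]
      rw [add_assoc]
      congr 1
      conv_rhs => rw [succ_nsmul']

lemma list_prod_mul {ι M : Type*} [Monoid M] (l : List ι) (f g : ι → M)
    (h : ∀ i ∈ l, ∀ j ∈ l, Commute (g i) (f j)) :
    (l.map f).prod * (l.map g).prod = (l.map fun i => f i * g i).prod := by
  induction l with
  | nil => simp
  | cons a l ih =>
    simp only [List.map_cons, List.prod_cons]
    have hP : Commute (g a) ((l.map f).prod) :=
      Commute.list_prod_right _ _ fun y hy => by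
        obtain ⟨j, hj, rfl⟩ := List.mem_map.mp hy
        exact h a List.mem_cons_self j (List.mem_cons_of_mem _ hj)
    calc f a * (l.map f).prod * (g a * (l.map g).prod)
        = f a * (((l.map f).prod * g a) * (l.map g).prod) := by
          simp only [mul_assoc]
      _ = f a * ((g a * (l.map f).prod) * (l.map g).prod) := by rw [← hP.eq]
      _ = (f a * g a) * ((l.map f).prod * (l.map g).prod) := by
          simp only [mul_assoc]
      _ = (f a * g a) * (l.map fun i => f i * g i).prod := by
          rw [ih fun i hi j hj => h i (List.mem_cons_of_mem _ hi) j (List.mem_cons_of_mem _ hj)]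

lemma monT_mul_monT (I I' : Fin d → ℕ) :
    monomialT k d I * monomialT k d I' = monomialT k d (I + I') := by
  unfold monomialT
  rw [list_prod_mul _ _ _ fun i _ j _ => ((commute_t_t i j).pow_pow _ _)]
  congr 1
  refine List.map_congr_left fun i _ => ?_
  rw [Pi.add_apply, pow_add]

lemma monD_mul_monD (J J' : Fin d → ℕ) :
    monomialD k d J * monomialD k d J' = monomialD k d (J + J') := by
  unfold monomialD
  rw [list_prod_mul _ _ _ fun i _ j _ => ((commute_del_del i j).pow_pow _ _)]
  congr 1
  refine List.map_congr_left fun i _ => ?_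
  rw [Pi.add_apply, pow_add]

lemma monT_single (i : Fin d) (n : ℕ) :
    monomialT k d (fun j => if j = i then n else 0) = t k d i ^ n := by
  unfold monomialT
  rw [List.prod_map_eq_pow_single i _ fun j hne _ => by simp [hne]]
  simp [List.count_eq_one_of_mem (List.nodup_finRange d) (List.mem_finRange i)]

lemma monD_single (i : Fin d) (n : ℕ) :
    monomialD k d (fun j => if j = i then n else 0) = del k d i ^ n := by
  unfold monomialD
  rw [List.prod_map_eq_pow_single i _ fun j hne _ => by simp [hne]]
  simp [List.count_eq_one_of_mem (List.nodup_finRange d) (List.mem_finRange i)]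

lemma monT_zero : monomialT k d 0 = 1 := by
  unfold monomialT
  refine List.prod_eq_one fun x hx => ?_
  obtain ⟨j, _, rfl⟩ := List.mem_map.mp hx
  simp

lemma monD_zero : monomialD k d 0 = 1 := by
  unfold monomialD
  refine List.prod_eq_one fun x hx => ?_
  obtain ⟨j, _, rfl⟩ := List.mem_map.mp hx
  simp


lemma commute_del_monT {i : Fin d} {I : Fin d → ℕ} (hI : I i = 0) :
    Commute (del k d i) (monomialT k d I) :=
  Commute.list_prod_right _ _ fun y hy => by
    obtain ⟨j, _, rfl⟩ := List.mem_map.mp hy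
    by_cases hj : j = i
    · subst hj; rw [hI, pow_zero]; exact Commute.one_right _
    · exact (del_t_ne (Ne.symm hj)).pow_right _

lemma commute_t_monD {i : Fin d} {J : Fin d → ℕ} (hJ : J i = 0) :
    Commute (t k d i) (monomialD k d J) :=
  Commute.list_prod_right _ _ fun y hy => by
    obtain ⟨j, _, rfl⟩ := List.mem_map.mp hy
    by_cases hj : j = i
    · subst hj; rw [hJ, pow_zero]; exact Commute.one_right _
    · exact ((del_t_ne hj).symm).pow_right _

lemma monT_factor (i : Fin d) (I : Fin d → ℕ) :
    monomialT k d I = t k d i ^ I i * monomialT k d (Function.update I i 0) := by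
  rw [← monT_single i (I i), monT_mul_monT]
  congr 1
  funext j
  by_cases hj : j = i <;> simp [Function.update_apply, hj]

lemma monD_factor' (i : Fin d) (J : Fin d → ℕ) :
    monomialD k d J = monomialD k d (Function.update J i 0) * del k d i ^ J i := by
  rw [← monD_single i (J i), monD_mul_monD]
  congr 1
  funext j
  by_cases hj : j = i <;> simp [Function.update_apply, hj]

lemma del_mul_monT (i : Fin d) (I : Fin d → ℕ) :
    del k d i * monomialT k d I =
      monomialT k d I * del k d i
        + (I i) • monomialT k d (fun j => I j - if j = i then 1 else 0) := by
  have hQ : Commute (del k d i) (monomialT k d (Function.update I i 0)) :=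
    commute_del_monT (by simp)
  conv_lhs => rw [monT_factor i I]
  rw [← mul_assoc, del_mul_t_pow, add_mul, mul_assoc, hQ.eq, ← mul_assoc, ← monT_factor,
    smul_mul_assoc]
  congr 2
  rw [← monT_single i (I i - 1), monT_mul_monT]
  congr 1
  funext j
  by_cases hj : j = i <;> simp [Function.update_apply, hj]

lemma monD_mul_t (i : Fin d) (J : Fin d → ℕ) :
    monomialD k d J * t k d i =
      t k d i * monomialD k d J
        + (J i) • monomialD k d (fun j => J j - if j = i then 1 else 0) := by
  have hQ : Commute (t k d i) (monomialD k d (Function.update J i 0)) :=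
    commute_t_monD (by simp)
  conv_lhs => rw [monD_factor' i J]
  rw [mul_assoc, del_pow_mul_t, mul_add, ← mul_assoc, ← hQ.eq, mul_assoc, ← monD_factor',
    mul_smul_comm]
  congr 2
  rw [← monD_single i (J i - 1), monD_mul_monD]
  congr 1
  funext j
  by_cases hj : j = i <;> simp [Function.update_apply, hj]

lemma t_mul_monT (i : Fin d) (I : Fin d → ℕ) :
    t k d i * monomialT k d I
      = monomialT k d (fun j => (if j = i then 1 else 0) + I j) := by
  rw [← pow_one (t k d i), ← monT_single i 1, monT_mul_monT]
  rfl

lemma del_mul_monD (i : Fin d) (J : Fin d → ℕ) :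
    del k d i * monomialD k d J
      = monomialD k d (fun j => (if j = i then 1 else 0) + J j) := by
  rw [← pow_one (del k d i), ← monD_single i 1, monD_mul_monD]
  rfl

lemma monD_mul_del (i : Fin d) (J : Fin d → ℕ) :
    monomialD k d J * del k d i
      = monomialD k d (fun j => J j + if j = i then 1 else 0) := by
  rw [← pow_one (del k d i), ← monD_single i 1, monD_mul_monD]
  rfl

lemma monT_mul_t (i : Fin d) (I : Fin d → ℕ) :
    monomialT k d I * t k d i
      = monomialT k d (fun j => I j + if j = i then 1 else 0) := by
  rw [← pow_one (t k d i), ← monT_single i 1, monT_mul_monT]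
  rfl

lemma adjoin_top :
    Algebra.adjoin k (Set.range (t k d) ∪ Set.range (del k d)) = ⊤ := by
  rw [← Set.Sum.elim_range]
  have h : Sum.elim (t k d) (del k d)
      = (RingQuot.mkAlgHom k (WeylRel k d)) ∘ (FreeAlgebra.ι k) := by
    funext x; cases x <;> rfl
  rw [h, Set.range_comp, ← AlgHom.map_adjoin, FreeAlgebra.adjoin_range_ι, Algebra.map_top]
  exact (AlgHom.range_eq_top _).mpr (RingQuot.mkAlgHom_surjective k _)

lemma mem_center (x : WeylAlgebra k d) (h1 : ∀ i, Commute (t k d i) x)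
    (h2 : ∀ i, Commute (del k d i) x) :
    x ∈ Subalgebra.center k (WeylAlgebra k d) := by
  rw [Subalgebra.mem_center_iff]
  intro y
  have htop : (⊤ : Subalgebra k (WeylAlgebra k d)) ≤ Subalgebra.centralizer k {x} := by
    rw [← adjoin_top]
    apply Algebra.adjoin_le
    rintro z (⟨i, rfl⟩ | ⟨i, rfl⟩) <;>
      refine (Subalgebra.mem_centralizer_iff _).mpr fun g hg => ?_ <;>
        rw [Set.mem_singleton_iff] at hg <;> subst hg
    · exact (h1 i).symm.eq
    · exact (h2 i).symm.eq
  have := htop (Algebra.mem_top (x := y))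
  exact (((Subalgebra.mem_centralizer_iff _).mp this) x rfl).symm

lemma t_pow_central {n : ℕ} (hn : (n : k) = 0) (i : Fin d) :
    t k d i ^ n ∈ Subalgebra.center k (WeylAlgebra k d) := by
  have hzero : (n : WeylAlgebra k d) = 0 := by
    rw [← map_natCast (algebraMap k (WeylAlgebra k d)) n, hn, map_zero]
  apply mem_center
  · intro j; exact (commute_t_t j i).pow_right n
  · intro j
    by_cases hj : j = i
    · subst hj
      show del k d j * t k d j ^ n = t k d j ^ n * del k d j
      rw [del_mul_t_pow, nsmul_eq_mul, hzero, zero_mul, add_zero]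
    · exact (del_t_ne hj).pow_right n
  
lemma del_pow_central {n : ℕ} (hn : (n : k) = 0) (i : Fin d) :
    del k d i ^ n ∈ Subalgebra.center k (WeylAlgebra k d) := by
  have hzero : (n : WeylAlgebra k d) = 0 := by
    rw [← map_natCast (algebraMap k (WeylAlgebra k d)) n, hn, map_zero]
  apply mem_center
  · intro j
    by_cases hj : i = j
    · subst hj
      show t k d i * del k d i ^ n = del k d i ^ n * t k d i
      rw [del_pow_mul_t, nsmul_eq_mul, hzero, zero_mul, add_zero]
    · exact ((del_t_ne hj).symm.pow_right n)
  · intro j; exact (commute_del_del j i).pow_right n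

lemma monT_central {I : Fin d → ℕ} (h : ∀ i, ((I i : k)) = 0) :
    monomialT k d I ∈ Subalgebra.center k (WeylAlgebra k d) := by
  refine Subalgebra.list_prod_mem _ fun x hx => ?_
  obtain ⟨j, _, rfl⟩ := List.mem_map.mp hx
  exact t_pow_central (h j) j

lemma monD_central {J : Fin d → ℕ} (h : ∀ i, ((J i : k)) = 0) :
    monomialD k d J ∈ Subalgebra.center k (WeylAlgebra k d) := by
  refine Subalgebra.list_prod_mem _ fun x hx => ?_
  obtain ⟨j, _, rfl⟩ := List.mem_map.mp hx
  exact del_pow_central (h j) j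

open MvPolynomial in
lemma pderiv_comm' {σ R : Type*} [CommSemiring R] [DecidableEq σ] (u v : σ)
    (q : MvPolynomial σ R) :
    pderiv u (pderiv v q) = pderiv v (pderiv u q) := by
  by_cases huv : u = v
  · subst huv; rfl
  · induction q using MvPolynomial.induction_on' with
    | monomial s a =>
      simp only [pderiv_monomial]
      rw [tsub_right_comm]
      congr 1
      rw [Finsupp.tsub_apply, Finsupp.tsub_apply,
        Finsupp.single_eq_of_ne (Ne.symm huv), Finsupp.single_eq_of_ne huv]
      simp only [Nat.sub_zero]
      ring
    | add p q hp hq => simp only [map_add, hp, hq]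

abbrev Pol (k : Type*) [CommRing k] (d : ℕ) := MvPolynomial (Fin d ⊕ Fin d) k

open MvPolynomial

variable (k d) in
def Dop (i : Fin d) : Module.End k (Pol k d) :=
  (pderiv (R := k) (σ := Fin d ⊕ Fin d) (Sum.inl i)).toLinearMap

@[simp] lemma Dop_apply (i : Fin d) (q : Pol k d) :
    Dop k d i q = pderiv (Sum.inl i) q := rfl

variable (k d) in
def Mop (f : Pol k d) : Module.End k (Pol k d) := Algebra.lmul k (Pol k d) f

@[simp] lemma Mop_apply (f q : Pol k d) : Mop k d f q = f * q := rfl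

variable (k d) in
def repGen : (Fin d ⊕ Fin d) → Module.End k (Pol k d) :=
  Sum.elim (fun i => Mop k d (X (Sum.inl i)))
    (fun i => Dop k d i + Mop k d (X (Sum.inr i)))

lemma repGen_rel {x y : FreeAlgebra k (Fin d ⊕ Fin d)} (h : WeylRel k d x y) :
    FreeAlgebra.lift k (repGen k d) x = FreeAlgebra.lift k (repGen k d) y := by
  induction h with
  | tt i j =>
    simp only [map_mul, FreeAlgebra.lift_ι_apply, repGen, Sum.elim_inl, Mop]
    rw [← map_mul, ← map_mul, mul_comm]
  | dd i j =>
    simp only [map_mul, FreeAlgebra.lift_ι_apply, repGen, Sum.elim_inr]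
    refine LinearMap.ext fun q => ?_
    simp only [Module.End.mul_apply, LinearMap.add_apply, Dop_apply, Mop_apply, map_add,
      pderiv_mul, pderiv_X_of_ne (show (Sum.inr j : Fin d ⊕ Fin d) ≠ Sum.inl i by simp),
      pderiv_X_of_ne (show (Sum.inr i : Fin d ⊕ Fin d) ≠ Sum.inl j by simp),
      pderiv_comm' (Sum.inl i) (Sum.inl j) q]
    ring
  | dt i j =>
    by_cases hij : i = j
    · subst hij
      rw [if_pos rfl]
      simp only [map_mul, map_add, map_one, FreeAlgebra.lift_ι_apply, repGen, Sum.elim_inl,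
        Sum.elim_inr]
      refine LinearMap.ext fun q => ?_
      simp only [Module.End.mul_apply, LinearMap.add_apply, Dop_apply, Mop_apply,
        pderiv_mul, pderiv_X_self, Module.End.one_apply]
      ring
    · rw [if_neg hij, add_zero]
      simp only [map_mul, FreeAlgebra.lift_ι_apply, repGen, Sum.elim_inl, Sum.elim_inr]
      refine LinearMap.ext fun q => ?_
      simp only [Module.End.mul_apply, LinearMap.add_apply, Dop_apply, Mop_apply,
        pderiv_mul,
        pderiv_X_of_ne (show (Sum.inl j : Fin d ⊕ Fin d) ≠ Sum.inl i by simp [Ne.symm hij]),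
        mul_zero, add_zero, zero_mul]
      ring

variable (k d) in
def rep : WeylAlgebra k d →ₐ[k] Module.End k (Pol k d) :=
  RingQuot.liftAlgHom k ⟨FreeAlgebra.lift k (repGen k d), fun _ _ h => repGen_rel h⟩

lemma rep_t (i : Fin d) : rep k d (t k d i) = Mop k d (X (Sum.inl i)) := by
  rw [t, rep, RingQuot.liftAlgHom_mkAlgHom_apply, FreeAlgebra.lift_ι_apply]
  rfl

lemma rep_del (i : Fin d) :
    rep k d (del k d i) = Dop k d i + Mop k d (X (Sum.inr i)) := by
  rw [del, rep, RingQuot.liftAlgHom_mkAlgHom_apply, FreeAlgebra.lift_ι_apply]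
  rfl

lemma rep_monT (I : Fin d → ℕ) :
    rep k d (monomialT k d I) = Mop k d (∏ i, X (Sum.inl i) ^ I i) := by
  unfold monomialT
  rw [map_list_prod, Fin.prod_univ_def, Mop, map_list_prod, List.map_map, List.map_map]
  congr 1
  refine List.map_congr_left fun i _ => ?_
  simp only [Function.comp_apply, map_pow, rep_t]
  rfl

def NoX (q : Pol k d) : Prop := ∀ i : Fin d, pderiv (Sum.inl i) q = 0

lemma noX_mul_ypow {q : Pol k d} (j : Fin d) (n : ℕ) (h : NoX q) :
    NoX (X (Sum.inr j) ^ n * q) := by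
  intro i
  rw [pderiv_mul, h i, mul_zero, add_zero, pderiv_pow,
    pderiv_X_of_ne (show (Sum.inr j : Fin d ⊕ Fin d) ≠ Sum.inl i by simp), mul_zero, zero_mul]

lemma rep_del_pow_apply (i : Fin d) (n : ℕ) {q : Pol k d} (h : NoX q) :
    rep k d (del k d i ^ n) q = X (Sum.inr i) ^ n * q := by
  induction n with
  | zero => simp
  | succ m ih =>
    rw [pow_succ', map_mul, Module.End.mul_apply, ih, rep_del, LinearMap.add_apply,
      Dop_apply, Mop_apply, noX_mul_ypow i m h, zero_add, ← mul_assoc, ← pow_succ']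

lemma rep_monD_aux (l : List (Fin d)) (J : Fin d → ℕ) {q : Pol k d} (h : NoX q) :
    ((l.map fun i => rep k d (del k d i ^ J i)).prod) q
        = ((l.map fun i => X (Sum.inr i) ^ J i).prod) * q
      ∧ NoX (((l.map fun i => X (Sum.inr i) ^ J i).prod) * q) := by
  induction l with
  | nil => simpa using h
  | cons a l ih =>
    simp only [List.map_cons, List.prod_cons, Module.End.mul_apply, ih.1]
    constructor
    · rw [rep_del_pow_apply a (J a) ih.2, mul_assoc]
    · rw [mul_assoc]
      exact noX_mul_ypow a (J a) ih.2

lemma rep_monD_one (J : Fin d → ℕ) :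
    rep k d (monomialD k d J) (1 : Pol k d) = ∏ i, X (Sum.inr i) ^ J i := by
  have h1 : NoX (1 : Pol k d) := fun i => pderiv_one
  unfold monomialD
  rw [map_list_prod, List.map_map]
  rw [Fin.prod_univ_def]
  simpa [Function.comp_def] using (rep_monD_aux (List.finRange d) J h1).1

variable (k d) in
def eps : WeylAlgebra k d →ₗ[k] Pol k d :=
  (LinearMap.applyₗ (1 : Pol k d)).comp (rep k d).toLinearMap

variable (k d) in
def wmon (m : (Fin d → ℕ) × (Fin d → ℕ)) : WeylAlgebra k d :=
  monomialT k d m.1 * monomialD k d m.2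

variable (d) in
def expf (m : (Fin d → ℕ) × (Fin d → ℕ)) : (Fin d ⊕ Fin d) →₀ ℕ :=
  Finsupp.equivFunOnFinite.symm (Sum.elim m.1 m.2)

lemma expf_injective : Function.Injective (expf d) := by
  intro m m' h
  have h2 : Sum.elim m.1 m.2 = Sum.elim m'.1 m'.2 :=
    Finsupp.equivFunOnFinite.symm.injective h
  ext i
  · exact congrFun h2 (Sum.inl i)
  · exact congrFun h2 (Sum.inr i)

lemma eps_wmon (m : (Fin d → ℕ) × (Fin d → ℕ)) :
    eps k d (wmon k d m) = monomial (expf d m) (1 : k) := by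
  have : eps k d (wmon k d m) = rep k d (wmon k d m) 1 := rfl
  rw [this, wmon, map_mul, Module.End.mul_apply, rep_monD_one, rep_monT, Mop_apply]
  rw [← prod_X_pow_eq_monomial]
  have hsplit :
      (∏ i, X (Sum.inl i) ^ m.1 i) * (∏ i, X (Sum.inr i) ^ m.2 i)
        = ∏ u : Fin d ⊕ Fin d, X u ^ (expf d m) u :=
    (Fintype.prod_sum_type (fun u : Fin d ⊕ Fin d => (X u : Pol k d) ^ (expf d m) u)).symm
  rw [hsplit]
  refine (Finset.prod_subset (Finset.subset_univ _) fun u _ hu => ?_).symm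
  rw [Finsupp.notMem_support_iff] at hu
  rw [hu, pow_zero]

lemma linearIndependent_wmon : LinearIndependent k (wmon k d) := by
  apply LinearIndependent.of_comp (eps k d)
  have hc : (eps k d) ∘ (wmon k d) = fun m => (basisMonomials (Fin d ⊕ Fin d) k) (expf d m) := by
    funext m
    simp [eps_wmon, coe_basisMonomials]
  rw [hc]
  exact (basisMonomials _ k).linearIndependent.comp _ expf_injective

lemma wmon_zero : wmon k d (0, 0) = 1 := by
  rw [wmon, monT_zero, monD_zero, one_mul]

lemma leftmul_stable {g : WeylAlgebra k d}
    (hg : ∀ m, g * wmon k d m ∈ Submodule.span k (Set.range (wmon k d))) :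
    ∀ x ∈ Submodule.span k (Set.range (wmon k d)),
      g * x ∈ Submodule.span k (Set.range (wmon k d)) := by
  intro x hx
  have h2 : Submodule.map (LinearMap.mulLeft k g) (Submodule.span k (Set.range (wmon k d)))
      ≤ Submodule.span k (Set.range (wmon k d)) := by
    rw [Submodule.map_span, Submodule.span_le]
    rintro y ⟨y', ⟨m, rfl⟩, rfl⟩
    exact hg m
  exact h2 ⟨x, hx, rfl⟩

lemma t_mul_wmon (i : Fin d) (m : (Fin d → ℕ) × (Fin d → ℕ)) :
    t k d i * wmon k d m = wmon k d (fun j => (if j = i then 1 else 0) + m.1 j, m.2) := by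
  rw [wmon, wmon, ← mul_assoc, t_mul_monT]

lemma del_mul_wmon (i : Fin d) (m : (Fin d → ℕ) × (Fin d → ℕ)) :
    del k d i * wmon k d m
      = wmon k d (m.1, fun j => (if j = i then 1 else 0) + m.2 j)
        + (m.1 i) • wmon k d (fun j => m.1 j - if j = i then 1 else 0, m.2) := by
  rw [wmon, ← mul_assoc, del_mul_monT, add_mul, mul_assoc, del_mul_monD, smul_mul_assoc]
  rfl

lemma span_wmon_top :
    ⊤ ≤ Submodule.span k (Set.range (wmon k d)) := by
  set S := Submodule.span k (Set.range (wmon k d)) with hS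
  have h1 : (1 : WeylAlgebra k d) ∈ S :=
    Submodule.subset_span ⟨(0, 0), wmon_zero⟩
  have hstable : ∀ a ∈ Algebra.adjoin k (Set.range (t k d) ∪ Set.range (del k d)),
      ∀ x ∈ S, a * x ∈ S := by
    intro a ha
    induction ha using Algebra.adjoin_induction with
    | mem z hz =>
      rcases hz with ⟨i, rfl⟩ | ⟨i, rfl⟩
      · exact leftmul_stable fun m => by
          rw [t_mul_wmon]; exact Submodule.subset_span ⟨_, rfl⟩
      · exact leftmul_stable fun m => by
          rw [del_mul_wmon]
          exact add_mem (Submodule.subset_span ⟨_, rfl⟩)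
            (Submodule.smul_mem _ _ (Submodule.subset_span ⟨_, rfl⟩))
    | algebraMap r =>
      intro x hx
      rw [← Algebra.smul_def]
      exact Submodule.smul_mem _ _ hx
    | add a b ha hb iha ihb =>
      intro x hx
      rw [add_mul]
      exact add_mem (iha x hx) (ihb x hx)
    | mul a b ha hb iha ihb =>
      intro x hx
      rw [mul_assoc]
      exact iha _ (ihb x hx)
  intro a _
  have ha : a ∈ Algebra.adjoin k (Set.range (t k d) ∪ Set.range (del k d)) := by
    rw [adjoin_top]; trivial
  simpa using hstable a ha 1 h1

variable (k d) in
def wbasis : Module.Basis ((Fin d → ℕ) × (Fin d → ℕ)) k (WeylAlgebra k d) :=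
  Module.Basis.mk linearIndependent_wmon span_wmon_top

@[simp] lemma wbasis_apply (m) : wbasis k d m = wmon k d m := by
  rw [wbasis, Module.Basis.coe_mk]

lemma hco_wbasis : ⇑(wbasis k d) = wmon k d := by
  rw [wbasis]; exact Module.Basis.coe_mk _ _

lemma repr_wmon (n : (Fin d → ℕ) × (Fin d → ℕ)) :
    (wbasis k d).repr (wmon k d n) = Finsupp.single n 1 := by
  rw [← hco_wbasis]; exact (wbasis k d).repr_self n

lemma z_sum_repr (z : WeylAlgebra k d) :
    z = ∑ m ∈ ((wbasis k d).repr z).support, ((wbasis k d).repr z) m • wmon k d m := by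
  conv_lhs => rw [← (wbasis k d).linearCombination_repr z]
  rw [Finsupp.linearCombination_apply, Finsupp.sum]
  exact Finset.sum_congr rfl fun m _ => by rw [hco_wbasis]

lemma cast_eq_zero_of_dvd {p n : ℕ} (hchar : (p : k) = 0) (h : p ∣ n) : (n : k) = 0 := by
  obtain ⟨c, rfl⟩ := h
  push_cast [hchar]
  ring

lemma cast_eq_cast_of_modeq {p a b : ℕ} (hchar : (p : k) = 0) (h : a ≡ b [MOD p]) :
    (a : k) = (b : k) := by
  calc (a : k) = ((p * (a / p) + a % p : ℕ) : k) := by rw [Nat.div_add_mod]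
    _ = ((a % p : ℕ) : k) := by push_cast [hchar]; ring
    _ = ((b % p : ℕ) : k) := by rw [h]
    _ = (b : k) := by
        conv_rhs => rw [← Nat.div_add_mod b p]
        push_cast [hchar]; ring

lemma fermat_cast {p n : ℕ} (hp : p.Prime) (hchar : (p : k) = 0) (h : ¬ p ∣ n) :
    ((n : k)) ^ (p - 1) = 1 := by
  have hco : Nat.Coprime n p := ((Nat.Prime.coprime_iff_not_dvd hp).mpr h).symm
  have hm : n ^ (p - 1) ≡ 1 [MOD p] := by
    have := Nat.ModEq.pow_totient hco
    rwa [Nat.totient_prime hp] at this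
  have := cast_eq_cast_of_modeq hchar hm
  push_cast at this
  simpa using this

lemma eq_zero_of_mul_cast_eq_zero {p n : ℕ} (hp : p.Prime) (hchar : (p : k) = 0)
    (h : ¬ p ∣ n) {r : k} (hr : r * (n : k) = 0) : r = 0 := by
  have hf := fermat_cast hp hchar h
  have h2 : p - 1 = (p - 2) + 1 := by
    have := hp.two_le; omega
  calc r = r * ((n : k)) ^ (p - 1) := by rw [hf, mul_one]
    _ = (r * (n : k)) * ((n : k)) ^ (p - 2) := by rw [h2, pow_succ]; ring
    _ = 0 := by rw [hr, zero_mul]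

lemma wmon_mul_t (i : Fin d) (m : (Fin d → ℕ) × (Fin d → ℕ)) :
    wmon k d m * t k d i
      = wmon k d (fun j => (if j = i then 1 else 0) + m.1 j, m.2)
        + (m.2 i) • wmon k d (m.1, fun j => m.2 j - if j = i then 1 else 0) := by
  simp only [wmon]
  rw [mul_assoc, monD_mul_t, mul_add, mul_smul_comm, ← mul_assoc, monT_mul_t]
  have hcom : (fun j => m.1 j + if j = i then 1 else 0)
      = (fun j => (if j = i then 1 else 0) + m.1 j) := by
    funext j; exact add_comm _ _
  rw [hcom]

lemma wmon_mul_del (i : Fin d) (m : (Fin d → ℕ) × (Fin d → ℕ)) :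
    wmon k d m * del k d i
      = wmon k d (m.1, fun j => (if j = i then 1 else 0) + m.2 j) := by
  simp only [wmon]
  rw [mul_assoc, monD_mul_del]
  have hcom : (fun j => m.2 j + if j = i then 1 else 0)
      = (fun j => (if j = i then 1 else 0) + m.2 j) := by
    funext j; exact add_comm _ _
  rw [hcom]

/-- Generic coefficient-extraction lemma. -/
lemma extract {r : ((Fin d → ℕ) × (Fin d → ℕ)) →₀ k}
    (c : ((Fin d → ℕ) × (Fin d → ℕ)) → ℕ) (σ : ((Fin d → ℕ) × (Fin d → ℕ)) → ((Fin d → ℕ) × (Fin d → ℕ)))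
    (hσ : ∀ m m', c m ≠ 0 → c m' ≠ 0 → σ m = σ m' → m = m')
    (hsum : ∑ m ∈ r.support, (r m * (c m : k)) • wmon k d (σ m) = 0)
    (m₀ : (Fin d → ℕ) × (Fin d → ℕ)) (hm₀ : m₀ ∈ r.support) :
    r m₀ * (c m₀ : k) = 0 := by
  by_cases hc : c m₀ = 0
  · rw [hc, Nat.cast_zero, mul_zero]
  · have h0 := congrArg (fun x => ((wbasis k d).repr x) (σ m₀)) hsum
    simp only [map_sum, map_smul, repr_wmon, map_zero, Finsupp.finset_sum_apply,
      Finsupp.smul_apply, Finsupp.single_apply, smul_eq_mul, mul_ite, mul_one, mul_zero,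
      Finsupp.coe_zero, Pi.zero_apply] at h0
    have hone : ∀ b ∈ r.support, b ≠ m₀ →
        (if σ b = σ m₀ then r b * (c b : k) else 0) = 0 := by
      intro b _ hb
      by_cases hcb : c b = 0
      · simp [hcb]
      · rw [if_neg fun he => hb (hσ b m₀ hcb hc he)]
    rw [Finset.sum_eq_single m₀ hone (fun h => absurd hm₀ h), if_pos rfl] at h0
    exact h0

lemma center_le_span {p : ℕ} (hp : p.Prime) (hchar : (p : k) = 0)
    {z : WeylAlgebra k d} (hz : z ∈ Subalgebra.center k (WeylAlgebra k d)) :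
    (((wbasis k d).repr z).support : Set ((Fin d → ℕ) × (Fin d → ℕ)))
      ⊆ {m | (∀ i, p ∣ m.1 i) ∧ ∀ i, p ∣ m.2 i} := by
  intro m₀ hm₀
  set r := (wbasis k d).repr z with hr
  have hm₀' : m₀ ∈ r.support := hm₀
  constructor
  · -- p ∣ m₀.1 i, using the commutator with del i
    intro i
    have hcomm : del k d i * z = z * del k d i := Subalgebra.mem_center_iff.mp hz _
    have e1 : del k d i * z
        = (∑ m ∈ r.support, r m • wmon k d (m.1, fun j => (if j = i then 1 else 0) + m.2 j))
          + ∑ m ∈ r.support, (r m * (m.1 i : k)) •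
              wmon k d (fun j => m.1 j - if j = i then 1 else 0, m.2) := by
      conv_lhs => rw [z_sum_repr z, Finset.mul_sum]
      rw [← Finset.sum_add_distrib]
      refine Finset.sum_congr rfl fun m _ => ?_
      rw [mul_smul_comm, del_mul_wmon, smul_add, ← Nat.cast_smul_eq_nsmul k, smul_smul]
    have e2 : z * del k d i
        = ∑ m ∈ r.support, r m • wmon k d (m.1, fun j => (if j = i then 1 else 0) + m.2 j) := by
      conv_lhs => rw [z_sum_repr z, Finset.sum_mul]
      refine Finset.sum_congr rfl fun m _ => ?_
      rw [smul_mul_assoc, wmon_mul_del]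
    rw [e1, e2] at hcomm
    have hzero := add_eq_left.mp hcomm
    by_contra hdvd
    have hkey : r m₀ * (m₀.1 i : k) = 0 := by
      refine extract (fun m => m.1 i) (fun m => (fun j => m.1 j - if j = i then 1 else 0, m.2))
        (fun m m' hcm hcm' he => ?_) hzero m₀ hm₀'
      obtain ⟨he1, he2⟩ := Prod.mk.injEq _ _ _ _ ▸ he
      refine Prod.ext ?_ he2
      funext j
      have hj := congrFun he1 j
      by_cases hji : j = i
      · subst hji
        have h1 : m.1 j ≠ 0 := hcm
        have h2 : m'.1 j ≠ 0 := hcm'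
        simp at hj
        omega
      · simpa [hji] using hj
    exact absurd (eq_zero_of_mul_cast_eq_zero hp hchar hdvd hkey)
      (Finsupp.mem_support_iff.mp hm₀')
  · -- p ∣ m₀.2 i, using the commutator with t i
    intro i
    have hcomm : t k d i * z = z * t k d i := Subalgebra.mem_center_iff.mp hz _
    have e1 : t k d i * z
        = ∑ m ∈ r.support, r m • wmon k d (fun j => (if j = i then 1 else 0) + m.1 j, m.2) := by
      conv_lhs => rw [z_sum_repr z, Finset.mul_sum]
      refine Finset.sum_congr rfl fun m _ => ?_
      rw [mul_smul_comm, t_mul_wmon]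
    have e2 : z * t k d i
        = (∑ m ∈ r.support, r m • wmon k d (fun j => (if j = i then 1 else 0) + m.1 j, m.2))
          + ∑ m ∈ r.support, (r m * (m.2 i : k)) •
              wmon k d (m.1, fun j => m.2 j - if j = i then 1 else 0) := by
      conv_lhs => rw [z_sum_repr z, Finset.sum_mul]
      rw [← Finset.sum_add_distrib]
      refine Finset.sum_congr rfl fun m _ => ?_
      rw [smul_mul_assoc, wmon_mul_t, smul_add, ← Nat.cast_smul_eq_nsmul k, smul_smul]
    rw [e1, e2] at hcomm
    have hzero := add_eq_left.mp hcomm.symm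
    by_contra hdvd
    have hkey : r m₀ * (m₀.2 i : k) = 0 := by
      refine extract (fun m => m.2 i) (fun m => (m.1, fun j => m.2 j - if j = i then 1 else 0))
        (fun m m' hcm hcm' he => ?_) hzero m₀ hm₀'
      obtain ⟨he1, he2⟩ := Prod.mk.injEq _ _ _ _ ▸ he
      refine Prod.ext he1 ?_
      funext j
      have hj := congrFun he2 j
      by_cases hji : j = i
      · subst hji
        have h1 : m.2 j ≠ 0 := hcm
        have h2 : m'.2 j ≠ 0 := hcm'
        simp at hj
        omega
      · simpa [hji] using hj
    exact absurd (eq_zero_of_mul_cast_eq_zero hp hchar hdvd hkey)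
      (Finsupp.mem_support_iff.mp hm₀')

lemma wmon_def (m : (Fin d → ℕ) × (Fin d → ℕ)) :
    wmon k d m = monomialT k d m.1 * monomialD k d m.2 := rfl

lemma wmon_mem_center {m : (Fin d → ℕ) × (Fin d → ℕ)}
    (h1 : ∀ i, ((m.1 i : k)) = 0) (h2 : ∀ i, ((m.2 i : k)) = 0) :
    wmon k d m ∈ Subalgebra.center k (WeylAlgebra k d) :=
  mul_mem (monT_central h1) (monD_central h2)

lemma wmon_mul_monT_of {m : (Fin d → ℕ) × (Fin d → ℕ)}
    (hm : monomialD k d m.2 ∈ Subalgebra.center k (WeylAlgebra k d)) (I' : Fin d → ℕ) :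
    wmon k d m * monomialT k d I' = wmon k d (fun j => m.1 j + I' j, m.2) := by
  simp only [wmon]
  rw [mul_assoc, ← Subalgebra.mem_center_iff.mp hm (monomialT k d I'), ← mul_assoc,
    monT_mul_monT]
  rfl

lemma wmon_mul_wmon_of {m m' : (Fin d → ℕ) × (Fin d → ℕ)}
    (hm : monomialD k d m.2 ∈ Subalgebra.center k (WeylAlgebra k d)) :
    wmon k d m * wmon k d m'
      = wmon k d (fun j => m.1 j + m'.1 j, fun j => m.2 j + m'.2 j) := by
  rw [wmon_def m', ← mul_assoc, wmon_mul_monT_of hm, wmon_def, wmon_def, mul_assoc,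
    monD_mul_monD]
  congr 1

lemma monT_mem_adjoin {p : ℕ} (I : Fin d → ℕ) :
    monomialT k d I ∈ Algebra.adjoin k
      (Set.range (t k d) ∪ Set.range fun i : Fin d => del k d i ^ p) := by
  refine Subalgebra.list_prod_mem _ fun x hx => ?_
  obtain ⟨j, _, rfl⟩ := List.mem_map.mp hx
  have h1 : t k d j ∈ Algebra.adjoin k
      (Set.range (t k d) ∪ Set.range fun i : Fin d => del k d i ^ p) :=
    Algebra.subset_adjoin (Or.inl ⟨j, rfl⟩)
  exact pow_mem h1 _

lemma monD_mem_adjoin {p : ℕ} {J : Fin d → ℕ} (h : ∀ i, p ∣ J i) :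
    monomialD k d J ∈ Algebra.adjoin k
      (Set.range (t k d) ∪ Set.range fun i : Fin d => del k d i ^ p) := by
  refine Subalgebra.list_prod_mem _ fun x hx => ?_
  obtain ⟨j, _, rfl⟩ := List.mem_map.mp hx
  have hpow : del k d j ^ J j = (del k d j ^ p) ^ (J j / p) := by
    rw [← pow_mul, Nat.mul_div_cancel' (h j)]
  rw [hpow]
  have h1 : del k d j ^ p ∈ Algebra.adjoin k
      (Set.range (t k d) ∪ Set.range fun i : Fin d => del k d i ^ p) :=
    Algebra.subset_adjoin (Or.inr ⟨j, rfl⟩)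
  exact pow_mem h1 _

lemma wmon_mem_adjoin {p : ℕ} {m : (Fin d → ℕ) × (Fin d → ℕ)} (h : ∀ i, p ∣ m.2 i) :
    wmon k d m ∈ Algebra.adjoin k
      (Set.range (t k d) ∪ Set.range fun i : Fin d => del k d i ^ p) :=
  mul_mem (monT_mem_adjoin m.1) (monD_mem_adjoin h)

lemma adjoin_le_spanSA {p : ℕ} (hchar : (p : k) = 0) {a : WeylAlgebra k d}
    (ha : a ∈ Algebra.adjoin k
      (Set.range (t k d) ∪ Set.range fun i : Fin d => del k d i ^ p)) :
    a ∈ Submodule.span k (wmon k d '' {m | ∀ i, p ∣ m.2 i}) := by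
  induction ha using Algebra.adjoin_induction with
  | mem z hz =>
    refine Submodule.subset_span ?_
    rcases hz with ⟨i, rfl⟩ | ⟨i, rfl⟩
    · refine ⟨((fun j => if j = i then 1 else 0), 0), fun i' => dvd_zero _, ?_⟩
      rw [wmon_def, monD_zero, mul_one]
      exact (monT_single i 1).trans (pow_one _)
    · refine ⟨(0, fun j => if j = i then p else 0), fun i' => ?_, ?_⟩
      · dsimp only
        split
        · exact dvd_refl p
        · exact dvd_zero p
      · rw [wmon_def, monT_zero, one_mul]
        exact monD_single i p
  | algebraMap r =>
    rw [Algebra.algebraMap_eq_smul_one]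
    exact Submodule.smul_mem _ _
      (Submodule.subset_span ⟨(0, 0), fun i => dvd_zero _, wmon_zero⟩)
  | add a b _ _ iha ihb => exact add_mem iha ihb
  | mul a b _ _ iha ihb =>
    have hmul := Submodule.mul_mem_mul iha ihb
    have h2 : Submodule.span k (wmon k d '' {m | ∀ i, p ∣ m.2 i})
          * Submodule.span k (wmon k d '' {m | ∀ i, p ∣ m.2 i})
        ≤ Submodule.span k (wmon k d '' {m | ∀ i, p ∣ m.2 i}) := by
      rw [Submodule.span_mul_span, Submodule.span_le]
      rintro x ⟨u, hu, v, hv, rfl⟩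
      obtain ⟨mu, hmu, rfl⟩ := hu
      obtain ⟨mv, hmv, rfl⟩ := hv
      refine Submodule.subset_span
        ⟨(fun j => mu.1 j + mv.1 j, fun j => mu.2 j + mv.2 j),
          fun i => dvd_add (hmu i) (hmv i), ?_⟩
      exact (wmon_mul_wmon_of
        (monD_central fun i => cast_eq_zero_of_dvd hchar (hmu i))).symm
    exact h2 hmul

lemma center_mem_adjoin {p : ℕ} (hp : p.Prime) (hchar : (p : k) = 0)
    {z : WeylAlgebra k d} (hz : z ∈ Subalgebra.center k (WeylAlgebra k d)) :
    z ∈ Algebra.adjoin k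
      (Set.range (t k d) ∪ Set.range fun i : Fin d => del k d i ^ p) := by
  have hsupp := center_le_span hp hchar hz
  have hmem : z ∈ Submodule.span k
      (⇑(wbasis k d) '' {m | (∀ i, p ∣ m.1 i) ∧ ∀ i, p ∣ m.2 i}) :=
    (Module.Basis.mem_span_image (b := wbasis k d)).mpr hsupp
  rw [hco_wbasis] at hmem
  have hle : Submodule.span k
        (wmon k d '' {m | (∀ i, p ∣ m.1 i) ∧ ∀ i, p ∣ m.2 i})
      ≤ Subalgebra.toSubmodule (Algebra.adjoin k
        (Set.range (t k d) ∪ Set.range fun i : Fin d => del k d i ^ p)) := by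
    rw [Submodule.span_le]
    rintro x ⟨m, hm, rfl⟩
    exact wmon_mem_adjoin hm.2
  exact hle hmem

/-- `Z`-linear independence of the monomials `t^I`, `I < p`. -/
lemma sum_central_monT_eq_zero {p : ℕ} (hp : p.Prime) (hchar : (p : k) = 0)
    (z : (Fin d → Fin p) → WeylAlgebra k d)
    (hz : ∀ I, z I ∈ Subalgebra.center k (WeylAlgebra k d))
    (hsum : ∑ I : Fin d → Fin p, z I * monomialT k d (fun i => (I i : ℕ)) = 0) :
    ∀ I, z I = 0 := by
  intro Istar
  by_contra hne
  have hrne : (wbasis k d).repr (z Istar) ≠ 0 := fun h =>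
    hne ((wbasis k d).repr.injective (by rw [h, map_zero]))
  obtain ⟨m₀, hm₀⟩ := Finsupp.support_nonempty_iff.mpr hrne
  have hexpand : ∀ I : Fin d → Fin p,
      z I * monomialT k d (fun i => (I i : ℕ))
        = ∑ m ∈ ((wbasis k d).repr (z I)).support,
            ((wbasis k d).repr (z I)) m • wmon k d (fun j => m.1 j + (I j : ℕ), m.2) := by
    intro I
    conv_lhs => rw [z_sum_repr (z I), Finset.sum_mul]
    refine Finset.sum_congr rfl fun m hm => ?_
    rw [smul_mul_assoc, wmon_mul_monT_of
      (monD_central fun i => cast_eq_zero_of_dvd hchar ((center_le_span hp hchar (hz I) hm).2 i))]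
  rw [Finset.sum_congr rfl fun I _ => hexpand I] at hsum
  have h0 := congrArg (fun x => ((wbasis k d).repr x)
    (fun j => m₀.1 j + (Istar j : ℕ), m₀.2)) hsum
  simp only [map_sum, map_smul, repr_wmon, map_zero, Finsupp.finset_sum_apply,
    Finsupp.smul_apply, Finsupp.single_apply, smul_eq_mul, mul_ite, mul_one, mul_zero,
    Finsupp.coe_zero, Pi.zero_apply] at h0
  have houter : ∀ I ∈ (Finset.univ : Finset (Fin d → Fin p)), I ≠ Istar →
      (∑ m ∈ ((wbasis k d).repr (z I)).support,
        if ((fun j => m.1 j + (I j : ℕ), m.2) : (Fin d → ℕ) × (Fin d → ℕ))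
            = (fun j => m₀.1 j + (Istar j : ℕ), m₀.2)
          then ((wbasis k d).repr (z I)) m else 0) = 0 := by
    intro I _ hI
    refine Finset.sum_eq_zero fun m hm => ?_
    rw [if_neg]
    intro heq
    apply hI
    funext j
    have h1 := congrFun (congrArg Prod.fst heq) j
    dsimp only at h1
    obtain ⟨u, hu⟩ := (center_le_span hp hchar (hz I) hm).1 j
    obtain ⟨v, hv⟩ := (center_le_span hp hchar (hz Istar) (by exact hm₀)).1 j
    have hIj : ((I j : ℕ)) % p = (I j : ℕ) := Nat.mod_eq_of_lt (I j).isLt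
    have hIsj : ((Istar j : ℕ)) % p = (Istar j : ℕ) := Nat.mod_eq_of_lt (Istar j).isLt
    have hmod := congrArg (· % p) h1
    rw [hu, hv, Nat.mul_add_mod, Nat.mul_add_mod, hIj, hIsj] at hmod
    exact Fin.ext hmod
  rw [Finset.sum_eq_single Istar houter (fun h => absurd (Finset.mem_univ _) h)] at h0
  have hinner : ∀ m ∈ ((wbasis k d).repr (z Istar)).support, m ≠ m₀ →
      (if ((fun j => m.1 j + (Istar j : ℕ), m.2) : (Fin d → ℕ) × (Fin d → ℕ))
          = (fun j => m₀.1 j + (Istar j : ℕ), m₀.2)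
        then ((wbasis k d).repr (z Istar)) m else 0) = 0 := by
    intro m _ hm
    rw [if_neg]
    intro heq
    apply hm
    have h2 := congrArg Prod.snd heq
    have h1 := congrArg Prod.fst heq
    refine Prod.ext ?_ h2
    funext j
    have := congrFun h1 j
    dsimp only at this
    omega
  rw [Finset.sum_eq_single m₀ hinner (fun h => absurd hm₀ h), if_pos rfl] at h0
  exact absurd h0 (Finsupp.mem_support_iff.mp hm₀)
end WeylAux

open WeylAux in
open WeylAlgebra in
/-- In characteristic `p`, the multiplication map `Z ⊗_{R'} R → A` is an isomorphism, where
`Z` is the center of the Weyl algebra `W`, `A = k[t_1,…,t_d,∂_1^p,…,∂_d^p]` is the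
centralizer of the `t`'s, `R = k[t_1,…,t_d]` and `R' = k[t_1^p,…,t_d^p]`. Since `R` is free
over `R'` with basis the monomials `t^I` with exponents in `{0,…,p−1}`, this says precisely
that an element of `W` lies in `A` if and only if it is, in a unique way, a `Z`-linear
combination `Σ_I z_I · t^I` of these monomials. -/
theorem weylAlgebra_centralizer_eq_center_tensor (p : ℕ) (hp : p.Prime)
    (k : Type*) [CommRing k] (hchar : (p : k) = 0) (d : ℕ) (hd : 1 ≤ d) :
    ∀ a : WeylAlgebra k d,
      a ∈ Algebra.adjoin k
          ((Set.range (t k d)) ∪ (Set.range fun i : Fin d => del k d i ^ p)) ↔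
        ∃! c : (Fin d → Fin p) → Subalgebra.center k (WeylAlgebra k d),
          a = ∑ I : Fin d → Fin p,
            (c I : WeylAlgebra k d) * monomialT k d fun i => (I i : ℕ) := by
  classical
  intro a
  constructor
  · intro ha
    have hspan := adjoin_le_spanSA hchar ha
    rw [← hco_wbasis] at hspan
    have hsupp : ↑((wbasis k d).repr a).support
        ⊆ {m : (Fin d → ℕ) × (Fin d → ℕ) | ∀ i, p ∣ m.2 i} :=
      (Module.Basis.mem_span_image (b := wbasis k d)).mp hspan
    set r := (wbasis k d).repr a with hr
    have hcmem : ∀ I₀ : Fin d → Fin p,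
        (∑ m ∈ r.support, if (∀ i, m.1 i % p = (I₀ i : ℕ))
            then r m • wmon k d (fun i => p * (m.1 i / p), m.2) else 0)
          ∈ Subalgebra.center k (WeylAlgebra k d) := by
      intro I₀
      refine sum_mem fun m hm => ?_
      split_ifs
      · refine Subalgebra.smul_mem _ ?_ _
        exact wmon_mem_center
          (fun i => cast_eq_zero_of_dvd hchar (dvd_mul_right p _))
          (fun i => cast_eq_zero_of_dvd hchar ((hsupp hm) i))
      · exact zero_mem _
    set c : (Fin d → Fin p) → Subalgebra.center k (WeylAlgebra k d) := fun I₀ =>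
      ⟨∑ m ∈ r.support, if (∀ i, m.1 i % p = (I₀ i : ℕ))
          then r m • wmon k d (fun i => p * (m.1 i / p), m.2) else 0, hcmem I₀⟩ with hcdef
    have hval : ∀ I₀ : Fin d → Fin p,
        (c I₀ : WeylAlgebra k d) * monomialT k d (fun i => (I₀ i : ℕ))
          = ∑ m ∈ r.support, if (∀ i, m.1 i % p = (I₀ i : ℕ))
              then r m • wmon k d m else 0 := by
      intro I₀
      show (∑ m ∈ r.support, if (∀ i, m.1 i % p = (I₀ i : ℕ))
          then r m • wmon k d (fun i => p * (m.1 i / p), m.2) else 0)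
            * monomialT k d (fun i => (I₀ i : ℕ)) = _
      rw [Finset.sum_mul]
      refine Finset.sum_congr rfl fun m hm => ?_
      split_ifs with hcond
      · rw [smul_mul_assoc, wmon_mul_monT_of (m := (fun i => p * (m.1 i / p), m.2))
          (by exact monD_central fun i => cast_eq_zero_of_dvd hchar ((hsupp hm) i))]
        have harg : ((fun j => (fun i => p * (m.1 i / p), m.2).1 j + (I₀ j : ℕ),
            (fun i => p * (m.1 i / p), m.2).2) : (Fin d → ℕ) × (Fin d → ℕ)) = m := by
          refine Prod.ext ?_ rfl
          funext j
          show p * (m.1 j / p) + (I₀ j : ℕ) = m.1 j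
          rw [← hcond j, Nat.div_add_mod]
        rw [harg]
      · rw [zero_mul]
    have hcsum : a = ∑ I₀ : Fin d → Fin p,
        (c I₀ : WeylAlgebra k d) * monomialT k d (fun i => (I₀ i : ℕ)) := by
      calc a = ∑ m ∈ r.support, r m • wmon k d m := z_sum_repr a
        _ = ∑ m ∈ r.support, ∑ I₀ : Fin d → Fin p,
            (if (∀ i, m.1 i % p = (I₀ i : ℕ)) then r m • wmon k d m else 0) := by
            refine Finset.sum_congr rfl fun m hm => ?_
            rw [Finset.sum_eq_single (fun i => (⟨m.1 i % p, Nat.mod_lt _ hp.pos⟩ : Fin p))]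
            · rw [if_pos fun i => rfl]
            · intro I₀ _ hne
              rw [if_neg]
              intro hcond
              exact hne (funext fun i => Fin.ext (hcond i).symm)
            · exact fun h => absurd (Finset.mem_univ _) h
        _ = ∑ I₀ : Fin d → Fin p, ∑ m ∈ r.support,
            (if (∀ i, m.1 i % p = (I₀ i : ℕ)) then r m • wmon k d m else 0) :=
            Finset.sum_comm
        _ = ∑ I₀ : Fin d → Fin p,
            (c I₀ : WeylAlgebra k d) * monomialT k d (fun i => (I₀ i : ℕ)) :=
            Finset.sum_congr rfl fun I₀ _ => (hval I₀).symm
    refine ⟨c, hcsum, ?_⟩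
    intro c' hc'
    have hz : ∀ I, ((c' I : WeylAlgebra k d) - (c I : WeylAlgebra k d))
        ∈ Subalgebra.center k (WeylAlgebra k d) := fun I => sub_mem (c' I).2 (c I).2
    have hzero : ∑ I : Fin d → Fin p,
        ((c' I : WeylAlgebra k d) - (c I : WeylAlgebra k d))
          * monomialT k d (fun i => (I i : ℕ)) = 0 := by
      simp only [sub_mul]
      rw [Finset.sum_sub_distrib, ← hc', ← hcsum, sub_self]
    have hz0 := sum_central_monT_eq_zero hp hchar _ hz hzero
    funext I
    exact Subtype.ext (sub_eq_zero.mp (hz0 I))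
  · rintro ⟨c, hc, -⟩
    rw [hc]
    refine sum_mem fun I _ => mul_mem ?_ (monT_mem_adjoin _)
    exact center_mem_adjoin hp hchar (c I).2
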